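/- Suppose Q_f is irreducible and m(Q_f) < c (i.e., Q_f ∈ I_1). If p* ∈ D minimizes θ̄ over D, then p* is irreducible and m(p*) ≤ c; that is, the unique stationary distribution π of p* satisfies Σ_i π_i·r_i ≤ c, so p* ∈ I_4 = I_1 ∪ I_3. -/

import Mathlib

open scoped BigOperators Classical
open Filter

noncomputable section

def IsRowStochastic {M : ℕ} (P : Matrix (Fin M) (Fin M) ℝ) : Prop :=
  (∀ i j, 0 ≤ P i j) ∧ ∀ i, ∑ j, P i j = 1

def IsIrreducibleMat {M : ℕ} (P : Matrix (Fin M) (Fin M) ℝ) : Prop :=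
  ∀ i j, ∃ n : ℕ, 1 ≤ n ∧ 0 < (P ^ n) i j

def IsStationaryDistr {M : ℕ} (P : Matrix (Fin M) (Fin M) ℝ) (π : Fin M → ℝ) : Prop :=
  (∀ i, 0 ≤ π i) ∧ (∑ i, π i = 1) ∧ ∀ j, ∑ i, π i * P i j = π j

def PiMat {M : ℕ} (r : Fin M → ℝ) (θ : ℝ) (A : Matrix (Fin M) (Fin M) ℝ) :
    Matrix (Fin M) (Fin M) ℝ :=
  Matrix.of fun i j => A i j * Real.exp (θ * r j)

def LambdaA {M : ℕ} (r : Fin M → ℝ) (θ : ℝ) (A : Matrix (Fin M) (Fin M) ℝ) : ℝ :=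
  Real.log ((spectralRadius ℝ (PiMat r θ A)).toReal)

def thetaStar {M : ℕ} (r : Fin M → ℝ) (c : ℝ) (A : Matrix (Fin M) (Fin M) ℝ) : ℝ :=
  sSup ({0} ∪ {θ : ℝ | 0 < θ ∧ LambdaA r θ A < θ * c})

def q1 {M : ℕ} (q : Fin M → Fin M → ℝ) (i : Fin M) : ℝ := ∑ j, q i j

def qf {M : ℕ} (q : Fin M → Fin M → ℝ) (i j : Fin M) : ℝ := q i j / q1 q i

def Qf {M : ℕ} (q : Fin M → Fin M → ℝ) : Matrix (Fin M) (Fin M) ℝ :=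
  Matrix.of fun i j => qf q i j

def Dset {M : ℕ} (q : Fin M → Fin M → ℝ) : Set (Matrix (Fin M) (Fin M) ℝ) :=
  {p | IsRowStochastic p ∧ ∀ i j, 0 < q i j → 0 < p i j}

def I3hat {M : ℕ} (q : Fin M → Fin M → ℝ) (p : Matrix (Fin M) (Fin M) ℝ) : ℝ :=
  ∑ i, q1 q i * ∑ j ∈ Finset.univ.filter (fun j => 0 < q i j),
    qf q i j * Real.log (qf q i j / p i j)

def thetaBar {M : ℕ} (r : Fin M → ℝ) (c : ℝ) (q : Fin M → Fin M → ℝ) (l s : ℝ)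
    (p : Matrix (Fin M) (Fin M) ℝ) : ℝ :=
  l * s * thetaStar r c p + I3hat q p

def I1set {M : ℕ} (r : Fin M → ℝ) (c : ℝ) : Set (Matrix (Fin M) (Fin M) ℝ) :=
  {P | IsRowStochastic P ∧ IsIrreducibleMat P ∧ ∃ π, IsStationaryDistr P π ∧ ∑ i, π i * r i < c}

def I2set {M : ℕ} (r : Fin M → ℝ) (c : ℝ) : Set (Matrix (Fin M) (Fin M) ℝ) :=
  {P | IsRowStochastic P ∧ IsIrreducibleMat P ∧ ∃ π, IsStationaryDistr P π ∧ c < ∑ i, π i * r i}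

def I3set {M : ℕ} (r : Fin M → ℝ) (c : ℝ) : Set (Matrix (Fin M) (Fin M) ℝ) :=
  {P | IsRowStochastic P ∧ IsIrreducibleMat P ∧ ∃ π, IsStationaryDistr P π ∧ ∑ i, π i * r i = c}

def toMat {M : ℕ} (x : EuclideanSpace ℝ (Fin M × Fin M)) : Matrix (Fin M) (Fin M) ℝ :=
  Matrix.of fun i j => x (i, j)

def toEuc {M : ℕ} (A : Matrix (Fin M) (Fin M) ℝ) : EuclideanSpace ℝ (Fin M × Fin M) :=
  (WithLp.equiv 2 ((Fin M × Fin M) → ℝ)).symm (fun ij => A ij.1 ij.2)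

def frobInner {M : ℕ} (A B : Matrix (Fin M) (Fin M) ℝ) : ℝ := ∑ i, ∑ j, A i j * B i j


open scoped Topology ENNReal


namespace PF
variable {M : ℕ}

lemma pow_entry_nonneg {A : Matrix (Fin M) (Fin M) ℝ} (hA : ∀ i j, 0 ≤ A i j) :
    ∀ n i j, 0 ≤ (A ^ n) i j := by
  intro n
  induction n with
  | zero => intro i j; simp [Matrix.one_apply]; split <;> norm_num
  | succ n ih =>
    intro i j
    rw [pow_succ, Matrix.mul_apply]
    exact Finset.sum_nonneg fun k _ => mul_nonneg (ih i k) (hA k j)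

lemma pow_pos_mono {A B : Matrix (Fin M) (Fin M) ℝ} (hA : ∀ i j, 0 ≤ A i j)
    (hB : ∀ i j, 0 ≤ B i j) (h : ∀ i j, 0 < A i j → 0 < B i j) :
    ∀ n i j, 0 < (A ^ n) i j → 0 < (B ^ n) i j := by
  intro n
  induction n with
  | zero => intro i j; simp
  | succ n ih =>
    intro i j hpos
    rw [pow_succ, Matrix.mul_apply] at hpos
    have : ∃ k ∈ Finset.univ, 0 < (A ^ n) i k * A k j := by
      by_contra hcon
      push_neg at hcon
      have : ∑ k, (A ^ n) i k * A k j ≤ 0 := Finset.sum_nonpos fun k hk => hcon k hk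
      linarith
    obtain ⟨k, -, hk⟩ := this
    have h1 : 0 < (A ^ n) i k := by
      rcases mul_pos_iff.mp hk with ⟨h1, _⟩ | ⟨h1, h2⟩
      · exact h1
      · exact absurd h2 (not_lt.mpr (hA k j))
    have h2 : 0 < A k j := by
      rcases mul_pos_iff.mp hk with ⟨_, h2⟩ | ⟨h1, _⟩
      · exact h2
      · exact absurd h1 (not_lt.mpr (pow_entry_nonneg hA n i k))
    rw [pow_succ, Matrix.mul_apply]
    have hterm : 0 < (B ^ n) i k * B k j := mul_pos (ih i k h1) (h k j h2)
    refine Finset.sum_pos' (fun m _ => mul_nonneg (pow_entry_nonneg hB n i m) (hB m j)) ⟨k, Finset.mem_univ k, hterm⟩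

lemma irr_mono {A B : Matrix (Fin M) (Fin M) ℝ} (hA : ∀ i j, 0 ≤ A i j)
    (hB : ∀ i j, 0 ≤ B i j) (h : ∀ i j, 0 < A i j → 0 < B i j)
    (hirr : IsIrreducibleMat A) : IsIrreducibleMat B := by
  intro i j
  obtain ⟨n, hn1, hn2⟩ := hirr i j
  exact ⟨n, hn1, pow_pos_mono hA hB h n i j hn2⟩

end PF
namespace PF
variable {M : ℕ}

lemma stationary_lin_pow {P : Matrix (Fin M) (Fin M) ℝ} {v : Fin M → ℝ}
    (hv : ∀ j, ∑ i, v i * P i j = v j) :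
    ∀ n j, ∑ i, v i * (P ^ n) i j = v j := by
  intro n
  induction n with
  | zero => intro j; simp [Matrix.one_apply, mul_ite]
  | succ n ih =>
    intro j
    have : ∀ i, v i * (P ^ (n+1)) i j = ∑ k, v i * (P ^ n) i k * P k j := by
      intro i
      rw [pow_succ, Matrix.mul_apply, Finset.mul_sum]
      exact Finset.sum_congr rfl fun k _ => by ring
    rw [Finset.sum_congr rfl fun i _ => this i, Finset.sum_comm]
    calc ∑ k, ∑ i, v i * (P ^ n) i k * P k j
        = ∑ k, (∑ i, v i * (P ^ n) i k) * P k j := by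
          refine Finset.sum_congr rfl fun k _ => ?_
          rw [Finset.sum_mul]
      _ = ∑ k, v k * P k j := by
          refine Finset.sum_congr rfl fun k _ => ?_
          rw [ih k]
      _ = v j := hv j

lemma stationary_pos (hM : 0 < M) {P : Matrix (Fin M) (Fin M) ℝ} {π : Fin M → ℝ}
    (hP : ∀ i j, 0 ≤ P i j) (hirr : IsIrreducibleMat P) (hπ : IsStationaryDistr P π) :
    ∀ j, 0 < π j := by
  obtain ⟨hπ0, hπ1, hπs⟩ := hπ
  have hex : ∃ i, 0 < π i := by
    by_contra hcon
    push_neg at hcon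
    have : ∑ i, π i ≤ 0 := Finset.sum_nonpos fun i _ => hcon i
    linarith
  obtain ⟨i0, hi0⟩ := hex
  intro j
  obtain ⟨n, -, hn⟩ := hirr i0 j
  have := stationary_lin_pow hπs n j
  rw [← this]
  refine Finset.sum_pos' (fun i _ => mul_nonneg (hπ0 i) (pow_entry_nonneg hP n i j)) ?_
  exact ⟨i0, Finset.mem_univ i0, mul_pos hi0 hn⟩

lemma stationary_unique (hM : 0 < M) {P : Matrix (Fin M) (Fin M) ℝ} {π π' : Fin M → ℝ}
    (hP : ∀ i j, 0 ≤ P i j) (hirr : IsIrreducibleMat P)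
    (hπ : IsStationaryDistr P π) (hπ' : IsStationaryDistr P π') : π = π' := by
  haveI : Nonempty (Fin M) := ⟨⟨0, hM⟩⟩
  have hpos := stationary_pos hM hP hirr hπ
  have hpos' := stationary_pos hM hP hirr hπ'
  obtain ⟨i0, -, hi0⟩ := Finset.exists_min_image Finset.univ (fun i => π i / π' i) ⟨Classical.arbitrary _, Finset.mem_univ _⟩
  set t := π i0 / π' i0 with ht
  have htpos : 0 < t := div_pos (hpos i0) (hpos' i0)
  set v : Fin M → ℝ := fun i => π i - t * π' i with hv
  have hv0 : ∀ i, 0 ≤ v i := by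
    intro i
    have := hi0 i (Finset.mem_univ i)
    have := (le_div_iff₀ (hpos' i)).mp this
    simp only [hv]; linarith
  have hvi0 : v i0 = 0 := by
    have hne : π' i0 ≠ 0 := ne_of_gt (hpos' i0)
    simp only [hv, ht]
    field_simp
    ring
  have hvlin : ∀ j, ∑ i, v i * P i j = v j := by
    intro j
    simp only [hv, sub_mul, Finset.sum_sub_distrib]
    rw [hπ.2.2 j]
    congr 1
    · rw [← hπ'.2.2 j, Finset.mul_sum]
      exact Finset.sum_congr rfl fun i _ => by ring
  have hvzero : ∀ j, v j = 0 := by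
    intro j
    by_contra hne
    have hvj : 0 < v j := lt_of_le_of_ne (hv0 j) (Ne.symm hne)
    obtain ⟨n, -, hn⟩ := hirr j i0
    have hsum := stationary_lin_pow hvlin n i0
    have : 0 < ∑ i, v i * (P ^ n) i i0 :=
      Finset.sum_pos' (fun i _ => mul_nonneg (hv0 i) (pow_entry_nonneg hP n i i0))
        ⟨j, Finset.mem_univ j, mul_pos hvj hn⟩
    rw [hsum, hvi0] at this
    exact lt_irrefl 0 this
  have ht1 : t = 1 := by
    have h1 : ∑ i, π i = ∑ i, t * π' i := by
      refine Finset.sum_congr rfl fun i _ => ?_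
      have := hvzero i
      simp only [hv] at this
      linarith
    rw [hπ.2.1, ← Finset.mul_sum, hπ'.2.1, mul_one] at h1
    exact h1.symm
  funext i
  have := hvzero i
  simp only [hv, ht1, one_mul] at this
  linarith

end PF
namespace PF
open scoped Topology
variable {M : ℕ}

lemma mulVec_apply (A : Matrix (Fin M) (Fin M) ℝ) (v : Fin M → ℝ) (i : Fin M) :
    A.mulVec v i = ∑ j, A i j * v j := by
  simp [Matrix.mulVec, dotProduct]

lemma perron (hM : 0 < M) {A : Matrix (Fin M) (Fin M) ℝ}
    (hA : ∀ i j, 0 ≤ A i j) (hirr : IsIrreducibleMat A) :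
    ∃ lam : ℝ, ∃ w : Fin M → ℝ, 0 < lam ∧ (∀ i, 0 < w i) ∧ A.mulVec w = lam • w := by
  haveI : Nonempty (Fin M) := ⟨⟨0, hM⟩⟩
  set S := stdSimplex ℝ (Fin M) with hS
  set T : Set ℝ := {t | 0 ≤ t ∧ ∃ x ∈ S, ∀ i, t * x i ≤ A.mulVec x i} with hT
  have hu0 : (fun _ : Fin M => (M : ℝ)⁻¹) ∈ S := by
    constructor
    · intro i; positivity
    · simp [Finset.sum_const, Finset.card_univ]
      field_simp
  have hT0 : (0 : ℝ) ∈ T := by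
    refine ⟨le_refl 0, fun _ => (M : ℝ)⁻¹, hu0, fun i => ?_⟩
    rw [zero_mul, mulVec_apply]
    exact Finset.sum_nonneg fun j _ => mul_nonneg (hA i j) (by positivity)
  have hTne : T.Nonempty := ⟨0, hT0⟩
  set C : ℝ := ∑ i, ∑ j, A i j with hC
  have hTbdd : BddAbove T := by
    refine ⟨C, fun t ht => ?_⟩
    obtain ⟨ht0, x, hxS, hx⟩ := ht
    have h1 : t = ∑ i, t * x i := by rw [← Finset.mul_sum, hxS.2, mul_one]
    have h2 : ∑ i, t * x i ≤ ∑ i, A.mulVec x i := Finset.sum_le_sum fun i _ => hx i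
    have h3 : ∑ i, A.mulVec x i = ∑ j, (∑ i, A i j) * x j := by
      simp only [mulVec_apply]
      rw [Finset.sum_comm]
      exact Finset.sum_congr rfl fun j _ => by rw [Finset.sum_mul]
    have h4 : ∀ j, (∑ i, A i j) * x j ≤ C * x j := by
      intro j
      refine mul_le_mul_of_nonneg_right ?_ (hxS.1 j)
      have : ∀ j', ∑ i, A i j' ≤ ∑ i', ∑ j', A i' j' := by
        intro j'
        calc ∑ i, A i j' ≤ ∑ i, ∑ j'', A i j'' := by
              refine Finset.sum_le_sum fun i _ => ?_
              exact Finset.single_le_sum (fun j'' _ => hA i j'') (Finset.mem_univ j')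
          _ = C := rfl
      exact this j
    have h5 : ∑ j, C * x j = C := by rw [← Finset.mul_sum, hxS.2, mul_one]
    calc t = ∑ i, t * x i := h1
      _ ≤ ∑ i, A.mulVec x i := h2
      _ = ∑ j, (∑ i, A i j) * x j := h3
      _ ≤ ∑ j, C * x j := Finset.sum_le_sum fun j _ => h4 j
      _ = C := h5
  set lam := sSup T with hlam
  have hlam0 : 0 ≤ lam := le_csSup hTbdd hT0
  -- attainment via sequences and compactness
  obtain ⟨u, -, hu_t, hu_mem⟩ := exists_seq_tendsto_sSup hTne hTbdd
  choose x hxS hx using fun n => (hu_mem n).2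
  obtain ⟨x0, hx0S, φ, hφ, hxconv⟩ := (isCompact_stdSimplex ℝ (Fin M)).tendsto_subseq hxS
  have hxi : ∀ i, Tendsto (fun n => x (φ n) i) atTop (𝓝 (x0 i)) := by
    intro i
    exact (tendsto_pi_nhds.mp hxconv) i
  have key : ∀ i, lam * x0 i ≤ A.mulVec x0 i := by
    intro i
    have h1 : Tendsto (fun n => u (φ n) * x (φ n) i) atTop (𝓝 (lam * x0 i)) :=
      (hu_t.comp hφ.tendsto_atTop).mul (hxi i)
    have h2 : Tendsto (fun n => A.mulVec (x (φ n)) i) atTop (𝓝 (A.mulVec x0 i)) := by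
      simp only [mulVec_apply]
      exact tendsto_finset_sum _ fun j _ => tendsto_const_nhds.mul (hxi j)
    exact le_of_tendsto_of_tendsto' h1 h2 fun n => hx (φ n) i
  -- the positive matrix B
  choose nf hnf1 hnf2 using fun p : Fin M × Fin M => hirr p.1 p.2
  set N := Finset.univ.sup nf with hN
  set B : Matrix (Fin M) (Fin M) ℝ := ∑ k ∈ Finset.range (N + 1), A ^ k with hB
  have hBapp : ∀ i j, B i j = ∑ k ∈ Finset.range (N + 1), (A ^ k) i j := by
    intro i j; rw [hB, Matrix.sum_apply]
  have hBpos : ∀ i j, 0 < B i j := by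
    intro i j
    rw [hBapp]
    refine Finset.sum_pos' (fun k _ => pow_entry_nonneg hA k i j) ?_
    refine ⟨nf (i, j), ?_, hnf2 (i, j)⟩
    rw [Finset.mem_range]
    exact Nat.lt_succ_of_le (Finset.le_sup (Finset.mem_univ (i, j)))
  have hBcomm : A * B = B * A := by
    rw [hB, Finset.mul_sum, Finset.sum_mul]
    refine Finset.sum_congr rfl fun k _ => ?_
    rw [← pow_succ', ← pow_succ]
  have hBmul : ∀ v : Fin M → ℝ, (∀ i, 0 ≤ v i) → (∃ i, 0 < v i) → ∀ i, 0 < B.mulVec v i := by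
    intro v hv ⟨j0, hj0⟩ i
    rw [mulVec_apply]
    exact Finset.sum_pos' (fun j _ => mul_nonneg (le_of_lt (hBpos i j)) (hv j))
      ⟨j0, Finset.mem_univ j0, mul_pos (hBpos i j0) hj0⟩
  have hx0ex : ∃ j, 0 < x0 j := by
    by_contra hcon
    push_neg at hcon
    have : ∑ j, x0 j ≤ 0 := Finset.sum_nonpos fun j _ => hcon j
    rw [hx0S.2] at this; linarith
  -- A and B commute through mulVec
  have hABv : ∀ v, A.mulVec (B.mulVec v) = B.mulVec (A.mulVec v) := by
    intro v
    rw [Matrix.mulVec_mulVec, Matrix.mulVec_mulVec, hBcomm]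
  have heig : ∀ i, A.mulVec x0 i = lam * x0 i := by
    by_contra hcon
    push_neg at hcon
    obtain ⟨i1, hi1⟩ := hcon
    set y : Fin M → ℝ := fun i => A.mulVec x0 i - lam * x0 i with hy
    have hy0 : ∀ i, 0 ≤ y i := fun i => by simp only [hy]; linarith [key i]
    have hy1 : 0 < y i1 := lt_of_le_of_ne (hy0 i1) (by simp only [hy]; intro hcc; apply hi1; linarith)
    set w := B.mulVec x0 with hw
    set z := B.mulVec y with hz
    have hwpos : ∀ i, 0 < w i := hBmul x0 hx0S.1 hx0ex
    have hzpos : ∀ i, 0 < z i := hBmul y hy0 ⟨i1, hy1⟩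
    have hAw : ∀ i, A.mulVec w i = lam * w i + z i := by
      intro i
      rw [hw, hABv x0]
      have : A.mulVec x0 = fun k => lam * x0 k + y k := by
        funext k; simp only [hy]; ring
      rw [this, hz]
      simp only [mulVec_apply, mul_add, Finset.sum_add_distrib]
      congr 1
      · rw [Finset.mul_sum]
        exact Finset.sum_congr rfl fun j _ => by ring
    obtain ⟨i2, -, hi2⟩ := Finset.exists_min_image Finset.univ (fun i => z i / w i)
      ⟨Classical.arbitrary _, Finset.mem_univ _⟩
    set ε := z i2 / w i2 with hε
    have hεpos : 0 < ε := div_pos (hzpos i2) (hwpos i2)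
    have hstep : ∀ i, (lam + ε) * w i ≤ A.mulVec w i := by
      intro i
      have h1 : ε ≤ z i / w i := hi2 i (Finset.mem_univ i)
      have h2 : ε * w i ≤ z i := (le_div_iff₀ (hwpos i)).mp h1
      rw [hAw i]; nlinarith
    set sw := ∑ i, w i with hsw
    have hswpos : 0 < sw := Finset.sum_pos (fun i _ => hwpos i) Finset.univ_nonempty
    set uu : Fin M → ℝ := fun i => sw⁻¹ * w i with huu
    have huuS : uu ∈ S := by
      constructor
      · intro i; exact mul_nonneg (inv_nonneg.mpr hswpos.le) (hwpos i).le
      · simp only [huu]; rw [← Finset.mul_sum, ← hsw, inv_mul_cancel₀ (ne_of_gt hswpos)]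
    have hmem : lam + ε ∈ T := by
      refine ⟨by linarith, uu, huuS, fun i => ?_⟩
      have h3 : A.mulVec uu i = sw⁻¹ * A.mulVec w i := by
        simp only [mulVec_apply, huu, Finset.mul_sum]
        exact Finset.sum_congr rfl fun j _ => by ring
      rw [h3]
      have := hstep i
      have h4 : (lam + ε) * uu i = sw⁻¹ * ((lam + ε) * w i) := by simp only [huu]; ring
      rw [h4]
      exact mul_le_mul_of_nonneg_left this (inv_nonneg.mpr hswpos.le)
    have : lam + ε ≤ lam := le_csSup hTbdd hmem
    linarith
  -- now the eigenvector
  set w := B.mulVec x0 with hw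
  have hwpos : ∀ i, 0 < w i := hBmul x0 hx0S.1 hx0ex
  have hAx0 : A.mulVec x0 = lam • x0 := by
    funext i; rw [heig i]; simp
  have hAw : A.mulVec w = lam • w := by
    rw [hw, hABv x0, hAx0, Matrix.mulVec_smul]
  have hlampos : 0 < lam := by
    rcases lt_or_eq_of_le hlam0 with h | h
    · exact h
    · exfalso
      have hzero : ∀ i j, A i j = 0 := by
        intro i j
        have h1 : A.mulVec w i = 0 := by rw [hAw]; simp [← h]
        rw [mulVec_apply] at h1
        have h2 := (Finset.sum_eq_zero_iff_of_nonneg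
          (fun j' (_ : j' ∈ Finset.univ) => mul_nonneg (hA i j') (hwpos j').le)).mp h1 j (Finset.mem_univ j)
        rcases mul_eq_zero.mp h2 with h3 | h3
        · exact h3
        · exact absurd h3 (ne_of_gt (hwpos j))
      obtain ⟨n, hn1, hn2⟩ := hirr ⟨0, hM⟩ ⟨0, hM⟩
      have hA0 : A = 0 := by ext i j; exact hzero i j
      obtain ⟨m, rfl⟩ := Nat.exists_eq_add_of_le hn1
      rw [hA0] at hn2
      simp [pow_succ, add_comm 1 m] at hn2
  exact ⟨lam, w, hlampos, hwpos, hAw⟩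

end PF
namespace PF
open Matrix
open scoped ENNReal NNReal Topology
variable {M : ℕ}

lemma transpose_irr {A : Matrix (Fin M) (Fin M) ℝ} (h : IsIrreducibleMat A) :
    IsIrreducibleMat Aᵀ := by
  intro i j
  obtain ⟨n, hn1, hn2⟩ := h j i
  refine ⟨n, hn1, ?_⟩
  have he : Aᵀ ^ n = (A ^ n)ᵀ := (Matrix.transpose_pow A n).symm
  rw [he, Matrix.transpose_apply]
  exact hn2

lemma stationary_exists (hM : 0 < M) {P : Matrix (Fin M) (Fin M) ℝ}
    (hP : IsRowStochastic P) (hirr : IsIrreducibleMat P) :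
    ∃ π : Fin M → ℝ, IsStationaryDistr P π := by
  haveI : Nonempty (Fin M) := ⟨⟨0, hM⟩⟩
  obtain ⟨lam, w, hlam, hw, heig⟩ := perron (A := Pᵀ) hM (fun i j => hP.1 j i) (transpose_irr hirr)
  set sw := ∑ i, w i with hsw
  have hswpos : 0 < sw := Finset.sum_pos (fun i _ => hw i) Finset.univ_nonempty
  have hsum : ∀ j, Pᵀ.mulVec w j = ∑ i, w i * P i j := by
    intro j
    rw [mulVec_apply]
    exact Finset.sum_congr rfl fun i _ => by rw [Matrix.transpose_apply]; ring
  have hlam1 : lam = 1 := by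
    have h1 : ∑ j, Pᵀ.mulVec w j = ∑ i, w i := by
      rw [Finset.sum_congr rfl fun j (_ : j ∈ Finset.univ) => hsum j, Finset.sum_comm]
      refine Finset.sum_congr rfl fun i _ => ?_
      rw [← Finset.mul_sum, hP.2 i, mul_one]
    have h2 : ∑ j, Pᵀ.mulVec w j = lam * ∑ i, w i := by
      rw [heig]
      simp only [Pi.smul_apply, smul_eq_mul]
      rw [Finset.mul_sum]
    rw [h1] at h2
    have := h2
    nlinarith
  refine ⟨fun i => sw⁻¹ * w i, fun i => mul_nonneg (inv_nonneg.mpr hswpos.le) (hw i).le, ?_, ?_⟩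
  · rw [← Finset.mul_sum, ← hsw, inv_mul_cancel₀ (ne_of_gt hswpos)]
  · intro j
    have h3 : ∑ i, sw⁻¹ * w i * P i j = sw⁻¹ * ∑ i, w i * P i j := by
      rw [Finset.mul_sum]; exact Finset.sum_congr rfl fun i _ => by ring
    rw [h3, ← hsum j, heig]
    simp only [Pi.smul_apply, smul_eq_mul, hlam1, one_mul]

lemma lambda_lower (hM : 0 < M) (r : Fin M → ℝ) (θ : ℝ)
    {P : Matrix (Fin M) (Fin M) ℝ} (hP : IsRowStochastic P) (hirr : IsIrreducibleMat P)
    {π : Fin M → ℝ} (hπ : IsStationaryDistr P π) :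
    θ * (∑ i, π i * r i) ≤ LambdaA r θ P := by
  haveI : Nonempty (Fin M) := ⟨⟨0, hM⟩⟩
  set Pm : Matrix (Fin M) (Fin M) ℝ := PiMat r θ P with hPm
  have hPmapp : ∀ i j, Pm i j = P i j * Real.exp (θ * r j) := fun i j => rfl
  have hPmnn : ∀ i j, 0 ≤ Pm i j := fun i j =>
    mul_nonneg (hP.1 i j) (Real.exp_pos _).le
  have hPmirr : IsIrreducibleMat Pm := by
    refine irr_mono hP.1 hPmnn (fun i j h => ?_) hirr
    rw [hPmapp]; exact mul_pos h (Real.exp_pos _)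
  obtain ⟨lam, w, hlam, hw, heig⟩ := perron hM hPmnn hPmirr
  -- Jensen step: log lam ≥ θ * mean
  have hkey : ∀ i, θ * r i + Real.log (w i) ≤ Real.log lam + Real.log (w i) → True := fun _ _ => trivial
  have hjen : ∀ i, ∑ j, P i j * (θ * r j + Real.log (w j)) ≤ Real.log lam + Real.log (w i) := by
    intro i
    have h1 : Pm.mulVec w i = lam * w i := by rw [heig]; simp
    have h2 : Pm.mulVec w i = ∑ j, P i j * (Real.exp (θ * r j) * w j) := by
      rw [mulVec_apply]
      exact Finset.sum_congr rfl fun j _ => by rw [hPmapp]; ring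
    have hjensen : ∑ j, P i j • Real.log (Real.exp (θ * r j) * w j) ≤
        Real.log (∑ j, P i j • (Real.exp (θ * r j) * w j)) := by
      refine (strictConcaveOn_log_Ioi.concaveOn).le_map_sum (fun j _ => hP.1 i j) (hP.2 i) ?_
      intro j _
      exact Set.mem_Ioi.mpr (mul_pos (Real.exp_pos _) (hw j))
    simp only [smul_eq_mul] at hjensen
    have h3 : ∀ j, Real.log (Real.exp (θ * r j) * w j) = θ * r j + Real.log (w j) := by
      intro j
      rw [Real.log_mul (Real.exp_ne_zero _) (ne_of_gt (hw j)), Real.log_exp]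
    calc ∑ j, P i j * (θ * r j + Real.log (w j))
        = ∑ j, P i j * Real.log (Real.exp (θ * r j) * w j) :=
          Finset.sum_congr rfl fun j _ => by rw [h3]
      _ ≤ Real.log (∑ j, P i j * (Real.exp (θ * r j) * w j)) := hjensen
      _ = Real.log (lam * w i) := by rw [← h2, h1]
      _ = Real.log lam + Real.log (w i) := Real.log_mul (ne_of_gt hlam) (ne_of_gt (hw i))
  have hmean : θ * (∑ i, π i * r i) ≤ Real.log lam := by
    have h4 : ∑ i, π i * (∑ j, P i j * (θ * r j + Real.log (w j))) ≤
        ∑ i, π i * (Real.log lam + Real.log (w i)) :=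
      Finset.sum_le_sum fun i _ => mul_le_mul_of_nonneg_left (hjen i) (hπ.1 i)
    have h5 : ∑ i, π i * (Real.log lam + Real.log (w i)) =
        Real.log lam + ∑ i, π i * Real.log (w i) := by
      simp only [mul_add, Finset.sum_add_distrib]
      rw [← Finset.sum_mul, hπ.2.1, one_mul]
    have h6 : ∑ i, π i * (∑ j, P i j * (θ * r j + Real.log (w j))) =
        θ * (∑ j, π j * r j) + ∑ j, π j * Real.log (w j) := by
      have e1 : ∀ i, π i * (∑ j, P i j * (θ * r j + Real.log (w j))) =
          ∑ j, π i * P i j * (θ * r j + Real.log (w j)) := by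
        intro i; rw [Finset.mul_sum]; exact Finset.sum_congr rfl fun j _ => by ring
      rw [Finset.sum_congr rfl fun i _ => e1 i, Finset.sum_comm]
      have e2 : ∀ j, ∑ i, π i * P i j * (θ * r j + Real.log (w j)) =
          π j * (θ * r j + Real.log (w j)) := by
        intro j
        rw [← Finset.sum_mul, hπ.2.2 j]
      rw [Finset.sum_congr rfl fun j _ => e2 j]
      simp only [mul_add, Finset.sum_add_distrib, Finset.mul_sum]
      congr 1
      exact Finset.sum_congr rfl fun j _ => by ring
    rw [h5, h6] at h4
    linarith
  -- lam is an eigenvalue hence in the spectrum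
  have hw0 : w ≠ 0 := by
    intro h
    have := hw ⟨0, hM⟩
    rw [h] at this
    exact lt_irrefl 0 this
  have hmem : lam ∈ spectrum ℝ Pm := by
    rw [spectrum.mem_iff]
    intro hu
    have halg : algebraMap ℝ (Matrix (Fin M) (Fin M) ℝ) lam = lam • (1 : Matrix (Fin M) (Fin M) ℝ) :=
      Algebra.algebraMap_eq_smul_one lam
    have h0 : (algebraMap ℝ (Matrix (Fin M) (Fin M) ℝ) lam - Pm).mulVec w = 0 := by
      rw [halg, Matrix.sub_mulVec, Matrix.smul_mulVec, Matrix.one_mulVec, heig, sub_self]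
    obtain ⟨U, hU⟩ := hu
    have h1 : (((U⁻¹ : (Matrix (Fin M) (Fin M) ℝ)ˣ) : Matrix (Fin M) (Fin M) ℝ) *
        (algebraMap ℝ (Matrix (Fin M) (Fin M) ℝ) lam - Pm)).mulVec w = w := by
      rw [← hU, Units.inv_mul, Matrix.one_mulVec]
    rw [← Matrix.mulVec_mulVec, h0, Matrix.mulVec_zero] at h1
    exact hw0 h1.symm
  -- bound the spectrum
  set C : ℝ := ∑ i, ∑ j, Pm i j with hC
  have hC0 : 0 ≤ C := Finset.sum_nonneg fun i _ => Finset.sum_nonneg fun j _ => hPmnn i j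
  have hbound : ∀ k ∈ spectrum ℝ Pm, |k| ≤ C := by
    intro k hk
    rw [spectrum.mem_iff] at hk
    have halg : algebraMap ℝ (Matrix (Fin M) (Fin M) ℝ) k = k • (1 : Matrix (Fin M) (Fin M) ℝ) :=
      Algebra.algebraMap_eq_smul_one k
    rw [halg, Matrix.isUnit_iff_isUnit_det, isUnit_iff_ne_zero, not_not] at hk
    obtain ⟨v, hv0, hveq⟩ := Matrix.exists_mulVec_eq_zero_iff.mpr hk
    have hvk : ∀ i, k * v i = Pm.mulVec v i := by
      intro i
      have := congrFun hveq i
      rw [Matrix.sub_mulVec, Matrix.smul_mulVec, Matrix.one_mulVec] at this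
      have h2 : (k • v) i - Pm.mulVec v i = 0 := this
      simp only [Pi.smul_apply, smul_eq_mul] at h2
      linarith
    obtain ⟨i0, -, hi0⟩ := Finset.exists_max_image Finset.univ (fun i => |v i|)
      ⟨Classical.arbitrary _, Finset.mem_univ _⟩
    have hvi0pos : 0 < |v i0| := by
      obtain ⟨i1, hi1⟩ := Function.ne_iff.mp hv0
      exact lt_of_lt_of_le (abs_pos.mpr hi1) (hi0 i1 (Finset.mem_univ i1))
    have h3 : |k| * |v i0| ≤ C * |v i0| := by
      calc |k| * |v i0| = |k * v i0| := (abs_mul k (v i0)).symm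
        _ = |Pm.mulVec v i0| := by rw [hvk i0]
        _ = |∑ j, Pm i0 j * v j| := by rw [mulVec_apply]
        _ ≤ ∑ j, |Pm i0 j * v j| := Finset.abs_sum_le_sum_abs _ _
        _ = ∑ j, Pm i0 j * |v j| := Finset.sum_congr rfl fun j _ => by
              rw [abs_mul, abs_of_nonneg (hPmnn i0 j)]
        _ ≤ ∑ j, Pm i0 j * |v i0| := Finset.sum_le_sum fun j _ =>
              mul_le_mul_of_nonneg_left (hi0 j (Finset.mem_univ j)) (hPmnn i0 j)
        _ = (∑ j, Pm i0 j) * |v i0| := by rw [Finset.sum_mul]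
        _ ≤ C * |v i0| := by
              refine mul_le_mul_of_nonneg_right ?_ (abs_nonneg _)
              exact Finset.single_le_sum (fun i (_ : i ∈ Finset.univ) =>
                Finset.sum_nonneg fun j _ => hPmnn i j) (Finset.mem_univ i0)
    exact le_of_mul_le_mul_right h3 hvi0pos
  -- spectral radius bounds
  have hup : spectralRadius ℝ Pm ≤ ENNReal.ofReal C := by
    rw [spectralRadius]
    refine iSup₂_le fun k hk => ?_
    rw [← enorm_eq_nnnorm, ← ofReal_norm]
    exact ENNReal.ofReal_le_ofReal (by rw [Real.norm_eq_abs]; exact hbound k hk)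
  have hlow : ENNReal.ofReal lam ≤ spectralRadius ℝ Pm := by
    have : (‖lam‖₊ : ℝ≥0∞) ≤ spectralRadius ℝ Pm := by
      rw [spectralRadius]
      exact le_biSup (fun k => (‖k‖₊ : ℝ≥0∞)) hmem
    rwa [← enorm_eq_nnnorm, ← ofReal_norm, Real.norm_eq_abs, abs_of_pos hlam] at this
  have hfin : spectralRadius ℝ Pm ≠ ⊤ :=
    ne_top_of_le_ne_top ENNReal.ofReal_ne_top hup
  have htoReal : lam ≤ (spectralRadius ℝ Pm).toReal := by
    have := ENNReal.toReal_mono hfin hlow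
    rwa [ENNReal.toReal_ofReal hlam.le] at this
  have hloglog : Real.log lam ≤ LambdaA r θ P := by
    rw [LambdaA]
    exact Real.log_le_log hlam htoReal
  linarith [hmean]

lemma thetaStar_eq_zero (hM : 0 < M) (r : Fin M → ℝ) (c : ℝ)
    {P : Matrix (Fin M) (Fin M) ℝ} (hP : IsRowStochastic P) (hirr : IsIrreducibleMat P)
    {π : Fin M → ℝ} (hπ : IsStationaryDistr P π) (hmean : c ≤ ∑ i, π i * r i) :
    thetaStar r c P = 0 := by
  have hempty : {θ : ℝ | 0 < θ ∧ LambdaA r θ P < θ * c} = ∅ := by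
    ext θ
    simp only [Set.mem_setOf_eq, Set.mem_empty_iff_false, iff_false, not_and]
    intro hθ
    have h1 := lambda_lower hM r θ hP hirr hπ
    have h2 : θ * c ≤ θ * (∑ i, π i * r i) := mul_le_mul_of_nonneg_left hmean hθ.le
    linarith
  rw [thetaStar, hempty, Set.union_empty, csSup_singleton]

end PF
namespace PF
open scoped Topology ENNReal
variable {M : ℕ}

lemma I3hat_nonneg {q : Fin M → Fin M → ℝ} (hq0 : ∀ i j, 0 ≤ q i j)
    (hq1 : ∀ i, 0 < q1 q i) {p : Matrix (Fin M) (Fin M) ℝ} (hp : p ∈ Dset q) :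
    0 ≤ I3hat q p := by
  rw [I3hat]
  refine Finset.sum_nonneg fun i _ => mul_nonneg (hq1 i).le ?_
  set F := Finset.univ.filter (fun j => 0 < q i j) with hF
  have hterm : ∀ j ∈ F, qf q i j - p i j ≤ qf q i j * Real.log (qf q i j / p i j) := by
    intro j hj
    have hqij : 0 < q i j := (Finset.mem_filter.mp hj).2
    have hg : 0 < qf q i j := div_pos hqij (hq1 i)
    have hpij : 0 < p i j := hp.2 i j hqij
    have hlog : Real.log (p i j / qf q i j) ≤ p i j / qf q i j - 1 :=
      Real.log_le_sub_one_of_pos (div_pos hpij hg)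
    have heq : Real.log (qf q i j / p i j) = -(Real.log (p i j / qf q i j)) := by
      rw [Real.log_div (ne_of_gt hg) (ne_of_gt hpij), Real.log_div (ne_of_gt hpij) (ne_of_gt hg)]
      ring
    rw [heq]
    have h2 : 1 - p i j / qf q i j ≤ -(Real.log (p i j / qf q i j)) := by linarith
    have h3 := mul_le_mul_of_nonneg_left h2 hg.le
    have h4 : qf q i j * (1 - p i j / qf q i j) = qf q i j - p i j := by
      field_simp
    linarith
  have hsum1 : ∑ j ∈ F, qf q i j = 1 := by
    have : ∑ j ∈ F, q i j = q1 q i := by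
      rw [q1]
      refine Finset.sum_subset (Finset.filter_subset _ _) fun j _ hj => ?_
      rw [Finset.mem_filter] at hj
      push_neg at hj
      exact le_antisymm (hj (Finset.mem_univ j)) (hq0 i j)
    calc ∑ j ∈ F, qf q i j = (∑ j ∈ F, q i j) / q1 q i := by
          rw [Finset.sum_div]
          rfl
      _ = 1 := by rw [this, div_self (ne_of_gt (hq1 i))]
  have hsum2 : ∑ j ∈ F, p i j ≤ 1 := by
    rw [← hp.1.2 i]
    exact Finset.sum_le_sum_of_subset_of_nonneg (Finset.filter_subset _ _)
      fun j _ _ => hp.1.1 i j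
  calc (0:ℝ) = 1 - 1 := by ring
    _ ≤ ∑ j ∈ F, qf q i j - ∑ j ∈ F, p i j := by linarith
    _ = ∑ j ∈ F, (qf q i j - p i j) := by rw [Finset.sum_sub_distrib]
    _ ≤ ∑ j ∈ F, qf q i j * Real.log (qf q i j / p i j) := Finset.sum_le_sum hterm

end PF
theorem stmt4 (M : ℕ) (hM : 2 ≤ M) (r : Fin M → ℝ) (hr : ∀ j, 0 ≤ r j)
    (c : ℝ) (hc : 0 < c)
    (hbdd : ∀ p : Matrix (Fin M) (Fin M) ℝ, IsRowStochastic p →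
      BddAbove {θ : ℝ | 0 < θ ∧ LambdaA r θ p < θ * c})
    (q : Fin M → Fin M → ℝ)
    (hq0 : ∀ i j, 0 ≤ q i j) (hqsum : ∑ i, ∑ j, q i j = 1)
    (hq1 : ∀ i, 0 < q1 q i)
    (l s : ℝ) (hl : 0 < l) (hs : 0 < s)
    (hQfirr : IsIrreducibleMat (Qf q))
    (πq : Fin M → ℝ) (hπq : IsStationaryDistr (Qf q) πq)
    (hQfmean : ∑ i, πq i * r i < c)
    (pstar : Matrix (Fin M) (Fin M) ℝ) (hpstar : pstar ∈ Dset q)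
    (hmin : ∀ p ∈ Dset q, thetaBar r c q l s pstar ≤ thetaBar r c q l s p) :
    IsIrreducibleMat pstar ∧
    ∀ π : Fin M → ℝ, IsStationaryDistr pstar π → ∑ i, π i * r i ≤ c := by
  have hM0 : 0 < M := lt_of_lt_of_le (by norm_num) hM
  haveI : Nonempty (Fin M) := ⟨⟨0, hM0⟩⟩
  have hQfentry : ∀ i j, Qf q i j = q i j / q1 q i := fun i j => rfl
  have hQfnn : ∀ i j, 0 ≤ Qf q i j := fun i j => div_nonneg (hq0 i j) (hq1 i).le
  have hQfstoch : IsRowStochastic (Qf q) := by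
    refine ⟨hQfnn, fun i => ?_⟩
    have : ∑ j, Qf q i j = (∑ j, q i j) / q1 q i := by
      rw [Finset.sum_div]; rfl
    rw [this]
    exact div_self (ne_of_gt (hq1 i))
  have hsupp : ∀ i j, 0 < q i j ↔ 0 < Qf q i j := by
    intro i j
    constructor
    · intro h; exact div_pos h (hq1 i)
    · intro h
      by_contra hcon
      have : q i j = 0 := le_antisymm (not_lt.mp hcon) (hq0 i j)
      rw [hQfentry, this, zero_div] at h
      exact lt_irrefl 0 h
  have part1 : IsIrreducibleMat pstar :=
    PF.irr_mono hQfnn hpstar.1.1 (fun i j h => hpstar.2 i j ((hsupp i j).mpr h)) hQfirr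
  refine ⟨part1, ?_⟩
  intro π hπ
  by_contra hgt
  push_neg at hgt
  by_cases hpq : pstar = Qf q
  · have hπQf : IsStationaryDistr (Qf q) π := hpq ▸ hπ
    have := PF.stationary_unique hM0 hQfstoch.1 hQfirr hπQf hπq
    rw [this] at hgt
    linarith
  -- pstar ≠ Qf : find a differing entry in the support
  have hdiff : ∃ i0 j0, 0 < q i0 j0 ∧ pstar i0 j0 ≠ Qf q i0 j0 := by
    by_contra h
    push_neg at h
    apply hpq
    ext i j
    by_cases hq' : 0 < q i j
    · exact h i j hq'
    · have hle : ∀ j', Qf q i j' ≤ pstar i j' := by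
        intro j'
        by_cases h2 : 0 < q i j'
        · rw [h i j' h2]
        · have hz : q i j' = 0 := le_antisymm (not_lt.mp h2) (hq0 i j')
          rw [hQfentry, hz, zero_div]
          exact hpstar.1.1 i j'
      have h0 : ∑ j', (pstar i j' - Qf q i j') = 0 := by
        rw [Finset.sum_sub_distrib, hQfstoch.2 i, hpstar.1.2 i]
        ring
      have := (Finset.sum_eq_zero_iff_of_nonneg
        (fun j' (_ : j' ∈ Finset.univ) => sub_nonneg.mpr (hle j'))).mp h0 j (Finset.mem_univ j)
      linarith
  obtain ⟨i0, j0, hq00, hne0⟩ := hdiff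
  -- the interpolation family
  set Pt : ℝ → Matrix (Fin M) (Fin M) ℝ :=
    fun t => Matrix.of fun i j => (1 - t) * pstar i j + t * Qf q i j with hPtdef
  have hPtapp : ∀ t i j, Pt t i j = (1 - t) * pstar i j + t * Qf q i j := fun _ _ _ => rfl
  have hPtstoch : ∀ t ∈ Set.Ioo (0:ℝ) 1, IsRowStochastic (Pt t) := by
    intro t ht
    constructor
    · intro i j
      rw [hPtapp]
      have := ht.1; have := ht.2
      have h1 : 0 ≤ (1 - t) * pstar i j := mul_nonneg (by linarith) (hpstar.1.1 i j)
      have h2 : 0 ≤ t * Qf q i j := mul_nonneg (by linarith) (hQfnn i j)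
      linarith
    · intro i
      have : ∑ j, Pt t i j = (1 - t) * (∑ j, pstar i j) + t * (∑ j, Qf q i j) := by
        simp only [hPtapp, Finset.sum_add_distrib, Finset.mul_sum]
      rw [this, hpstar.1.2 i, hQfstoch.2 i]
      ring
  have hPtD : ∀ t ∈ Set.Ioo (0:ℝ) 1, Pt t ∈ Dset q := by
    intro t ht
    refine ⟨hPtstoch t ht, fun i j hq' => ?_⟩
    rw [hPtapp]
    have h1 : 0 ≤ (1 - t) * pstar i j := mul_nonneg (by linarith [ht.2]) (hpstar.1.1 i j)
    have h2 : 0 < t * Qf q i j := mul_pos ht.1 ((hsupp i j).mp hq')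
    linarith
  have hPtirr : ∀ t ∈ Set.Ioo (0:ℝ) 1, IsIrreducibleMat (Pt t) := by
    intro t ht
    refine PF.irr_mono hpstar.1.1 (hPtstoch t ht).1 (fun i j h => ?_) part1
    rw [hPtapp]
    have h1 : 0 < (1 - t) * pstar i j := mul_pos (by linarith [ht.2]) h
    have h2 : 0 ≤ t * Qf q i j := mul_nonneg ht.1.le (hQfnn i j)
    linarith
  -- find t with stationary mean ≥ c via compactness
  have hex : ∃ t ∈ Set.Ioo (0:ℝ) 1, ∃ πt, IsStationaryDistr (Pt t) πt ∧ c ≤ ∑ i, πt i * r i := by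
    by_contra hno
    push_neg at hno
    set tseq : ℕ → ℝ := fun n => ((n : ℝ) + 2)⁻¹ with htseqdef
    have htmem : ∀ n, tseq n ∈ Set.Ioo (0:ℝ) 1 := by
      intro n
      have hn0 : (0:ℝ) ≤ (n:ℝ) := Nat.cast_nonneg n
      constructor
      · show (0:ℝ) < ((n : ℝ) + 2)⁻¹
        positivity
      · show ((n : ℝ) + 2)⁻¹ < 1
        have h2 : (1:ℝ) < (n:ℝ) + 2 := by linarith
        exact inv_lt_one_of_one_lt₀ h2
    have hst : ∀ n, ∃ πt, IsStationaryDistr (Pt (tseq n)) πt := fun n =>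
      PF.stationary_exists hM0 (hPtstoch _ (htmem n)) (hPtirr _ (htmem n))
    choose πs hπs using hst
    have hmem' : ∀ n, πs n ∈ stdSimplex ℝ (Fin M) := fun n => ⟨(hπs n).1, (hπs n).2.1⟩
    obtain ⟨xl, hxlS, φ, hφ, hconv⟩ := (isCompact_stdSimplex ℝ (Fin M)).tendsto_subseq hmem'
    have hxi : ∀ i, Filter.Tendsto (fun n => πs (φ n) i) Filter.atTop (𝓝 (xl i)) :=
      fun i => tendsto_pi_nhds.mp hconv i
    have htto : Filter.Tendsto (fun n => tseq (φ n)) Filter.atTop (𝓝 0) := by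
      have h1 : Filter.Tendsto tseq Filter.atTop (𝓝 0) := by
        rw [htseqdef]
        exact tendsto_inv_atTop_zero.comp
          (Filter.tendsto_atTop_add_const_right Filter.atTop 2 tendsto_natCast_atTop_atTop)
      exact h1.comp hφ.tendsto_atTop
    have hstatl : IsStationaryDistr pstar xl := by
      refine ⟨hxlS.1, hxlS.2, fun j => ?_⟩
      have hPij : ∀ i, Filter.Tendsto (fun n => Pt (tseq (φ n)) i j) Filter.atTop (𝓝 (pstar i j)) := by
        intro i
        simp only [hPtapp]
        have h1 : Filter.Tendsto
            (fun n => (1 - tseq (φ n)) * pstar i j + tseq (φ n) * Qf q i j)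
            Filter.atTop (𝓝 ((1 - 0) * pstar i j + 0 * Qf q i j)) :=
          (((tendsto_const_nhds.sub htto).mul tendsto_const_nhds)).add
            (htto.mul tendsto_const_nhds)
        simpa using h1
      have hL : Filter.Tendsto (fun n => ∑ i, πs (φ n) i * Pt (tseq (φ n)) i j)
          Filter.atTop (𝓝 (∑ i, xl i * pstar i j)) :=
        tendsto_finset_sum _ fun i _ => (hxi i).mul (hPij i)
      have heqs : (fun n => ∑ i, πs (φ n) i * Pt (tseq (φ n)) i j) = fun n => πs (φ n) j := by
        funext n
        exact (hπs (φ n)).2.2 j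
      rw [heqs] at hL
      exact tendsto_nhds_unique hL (hxi j)
    have hxlπ : xl = π := PF.stationary_unique hM0 hpstar.1.1 part1 hstatl hπ
    have hlim : Filter.Tendsto (fun n => ∑ i, πs (φ n) i * r i) Filter.atTop
        (𝓝 (∑ i, xl i * r i)) :=
      tendsto_finset_sum _ fun i _ => (hxi i).mul tendsto_const_nhds
    have hlt : ∀ n, ∑ i, πs (φ n) i * r i < c := fun n =>
      (hno _ (htmem (φ n)) _ (hπs (φ n)))
    have hle : ∑ i, xl i * r i ≤ c :=
      le_of_tendsto hlim (Filter.Eventually.of_forall fun n => (hlt n).le)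
    rw [hxlπ] at hle
    linarith
  obtain ⟨t, htIoo, πt, hπt, hmeant⟩ := hex
  -- thetaStar vanishes at pstar and Pt t
  have hts1 : thetaStar r c pstar = 0 :=
    PF.thetaStar_eq_zero hM0 r c hpstar.1 part1 hπ hgt.le
  have hts2 : thetaStar r c (Pt t) = 0 :=
    PF.thetaStar_eq_zero hM0 r c (hPtstoch t htIoo) (hPtirr t htIoo) hπt hmeant
  -- strict convexity comparison of I3hat
  have key : ∀ i j, 0 < q i j →
      (qf q i j * Real.log (qf q i j / Pt t i j) ≤
        (1 - t) * (qf q i j * Real.log (qf q i j / pstar i j)) ∧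
      (pstar i j ≠ Qf q i j →
        qf q i j * Real.log (qf q i j / Pt t i j) <
          (1 - t) * (qf q i j * Real.log (qf q i j / pstar i j)))) := by
    intro i j hqij
    have ha : 0 < pstar i j := hpstar.2 i j hqij
    have hg : 0 < qf q i j := div_pos hqij (hq1 i)
    have hbQ : Qf q i j = qf q i j := rfl
    have hb : 0 < Qf q i j := by rw [hbQ]; exact hg
    have hmixpos : 0 < Pt t i j := by
      rw [hPtapp]
      have h1 : 0 < (1 - t) * pstar i j := mul_pos (by linarith [htIoo.2]) ha
      have h2 : 0 ≤ t * Qf q i j := mul_nonneg htIoo.1.le hb.le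
      linarith
    have hLdiv1 : Real.log (qf q i j / Pt t i j) = Real.log (qf q i j) - Real.log (Pt t i j) :=
      Real.log_div (ne_of_gt hg) (ne_of_gt hmixpos)
    have hLdiv2 : Real.log (qf q i j / pstar i j) = Real.log (qf q i j) - Real.log (pstar i j) :=
      Real.log_div (ne_of_gt hg) (ne_of_gt ha)
    set L := Real.log (qf q i j) with hL
    set A := Real.log (pstar i j) with hA
    set PL := Real.log (Pt t i j) with hPL
    have hmixeq : Pt t i j = (1 - t) • pstar i j + t • Qf q i j := by
      rw [hPtapp]; simp [smul_eq_mul]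
    constructor
    · have hcc : (1 - t) • Real.log (pstar i j) + t • Real.log (Qf q i j) ≤
          Real.log ((1 - t) • pstar i j + t • Qf q i j) :=
        strictConcaveOn_log_Ioi.concaveOn.2 (Set.mem_Ioi.mpr ha) (Set.mem_Ioi.mpr hb)
          (by linarith [htIoo.2]) htIoo.1.le (by ring)
      rw [← hmixeq, hbQ] at hcc
      simp only [smul_eq_mul] at hcc
      have h2 : L - PL ≤ (1 - t) * (L - A) := by
        rw [← hA, ← hPL] at hcc
        nlinarith [hcc]
      calc qf q i j * Real.log (qf q i j / Pt t i j)
          = qf q i j * (L - PL) := by rw [hLdiv1]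
        _ ≤ qf q i j * ((1 - t) * (L - A)) := mul_le_mul_of_nonneg_left h2 hg.le
        _ = (1 - t) * (qf q i j * Real.log (qf q i j / pstar i j)) := by rw [hLdiv2]; ring
    · intro hne
      have hcc : (1 - t) • Real.log (pstar i j) + t • Real.log (Qf q i j) <
          Real.log ((1 - t) • pstar i j + t • Qf q i j) :=
        strictConcaveOn_log_Ioi.2 (Set.mem_Ioi.mpr ha) (Set.mem_Ioi.mpr hb)
          hne (by linarith [htIoo.2]) htIoo.1 (by ring)
      rw [← hmixeq, hbQ] at hcc
      simp only [smul_eq_mul] at hcc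
      have h2 : L - PL < (1 - t) * (L - A) := by
        rw [← hA, ← hPL] at hcc
        nlinarith [hcc]
      calc qf q i j * Real.log (qf q i j / Pt t i j)
          = qf q i j * (L - PL) := by rw [hLdiv1]
        _ < qf q i j * ((1 - t) * (L - A)) := by
            exact mul_lt_mul_of_pos_left h2 hg
        _ = (1 - t) * (qf q i j * Real.log (qf q i j / pstar i j)) := by rw [hLdiv2]; ring
  have hrow : ∀ i,
      ∑ j ∈ Finset.univ.filter (fun j => 0 < q i j),
        qf q i j * Real.log (qf q i j / Pt t i j) ≤
      (1 - t) * ∑ j ∈ Finset.univ.filter (fun j => 0 < q i j),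
        qf q i j * Real.log (qf q i j / pstar i j) := by
    intro i
    rw [Finset.mul_sum]
    exact Finset.sum_le_sum fun j hj => (key i j (Finset.mem_filter.mp hj).2).1
  have hrow0 :
      ∑ j ∈ Finset.univ.filter (fun j => 0 < q i0 j),
        qf q i0 j * Real.log (qf q i0 j / Pt t i0 j) <
      (1 - t) * ∑ j ∈ Finset.univ.filter (fun j => 0 < q i0 j),
        qf q i0 j * Real.log (qf q i0 j / pstar i0 j) := by
    rw [Finset.mul_sum]
    refine Finset.sum_lt_sum (fun j hj => (key i0 j (Finset.mem_filter.mp hj).2).1) ?_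
    exact ⟨j0, Finset.mem_filter.mpr ⟨Finset.mem_univ j0, hq00⟩,
      (key i0 j0 hq00).2 hne0⟩
  have hstrict : I3hat q (Pt t) < (1 - t) * I3hat q pstar := by
    rw [I3hat, I3hat, Finset.mul_sum]
    refine Finset.sum_lt_sum (fun i _ => ?_) ⟨i0, Finset.mem_univ i0, ?_⟩
    · calc q1 q i * ∑ j ∈ Finset.univ.filter (fun j => 0 < q i j),
            qf q i j * Real.log (qf q i j / Pt t i j)
          ≤ q1 q i * ((1 - t) * ∑ j ∈ Finset.univ.filter (fun j => 0 < q i j),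
            qf q i j * Real.log (qf q i j / pstar i j)) :=
            mul_le_mul_of_nonneg_left (hrow i) (hq1 i).le
        _ = (1 - t) * (q1 q i * ∑ j ∈ Finset.univ.filter (fun j => 0 < q i j),
            qf q i j * Real.log (qf q i j / pstar i j)) := by ring
    · calc q1 q i0 * ∑ j ∈ Finset.univ.filter (fun j => 0 < q i0 j),
            qf q i0 j * Real.log (qf q i0 j / Pt t i0 j)
          < q1 q i0 * ((1 - t) * ∑ j ∈ Finset.univ.filter (fun j => 0 < q i0 j),
            qf q i0 j * Real.log (qf q i0 j / pstar i0 j)) :=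
            mul_lt_mul_of_pos_left hrow0 (hq1 i0)
        _ = (1 - t) * (q1 q i0 * ∑ j ∈ Finset.univ.filter (fun j => 0 < q i0 j),
            qf q i0 j * Real.log (qf q i0 j / pstar i0 j)) := by ring
  have hgibbs : 0 ≤ I3hat q pstar := PF.I3hat_nonneg hq0 hq1 hpstar
  have hmin' := hmin (Pt t) (hPtD t htIoo)
  have e1 : thetaBar r c q l s pstar = I3hat q pstar := by
    rw [thetaBar, hts1, mul_zero, zero_add]
  have e2 : thetaBar r c q l s (Pt t) = I3hat q (Pt t) := by
    rw [thetaBar, hts2, mul_zero, zero_add]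
  rw [e1, e2] at hmin'
  nlinarith [htIoo.1, hgibbs, hstrict, hmin']
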